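/- If (S, N) is a quadratic normalisation of class (3, 3), then the associated rewriting system (S, R) is convergent; more precisely, every rewriting sequence starting from a length-p word has length at most p(p−1)/2. Moreover, if e is an N-neutral element of S, then the rewriting system (S∖{e}, R_e) is also convergent, where R_e consists of the rules s·t → π_e(N̄(s·t)) for s, t ∈ S∖{e} with s·t ≠ N̄(s·t). -/

import Mathlib

namespace QN

variable {S A : Type*}

/-- A normalisation: a length-preserving map `N` on words over `S` fixing
length-one words and satisfying `N (u ++ N w ++ v) = N (u ++ w ++ v)`. -/
structure Normalisation (S : Type*) where
  N : List S → List S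
  length_eq : ∀ w : List S, (N w).length = w.length
  single : ∀ s : S, N [s] = [s]
  mid : ∀ u v w : List S, N (u ++ N w ++ v) = N (u ++ w ++ v)

/-- Extract the two entries of a length-two word (with a default fallback). -/
def pairOf : List S → S → S → S × S
  | [x, y], _, _ => (x, y)
  | _, s, t => (s, t)

/-- The restriction `N̄` of `N` to length-two words, as a map on pairs. -/
def nbar (N : List S → List S) (s t : S) : S × S :=
  pairOf (N [s, t]) s t

/-- Apply `f` to the length-two factor at (1-indexed) position `i`;
out-of-range positions act as the identity. -/
def applyAt (f : S → S → S × S) : ℕ → List S → List S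
  | 1, a :: b :: l => (f a b).1 :: (f a b).2 :: l
  | n + 2, a :: l => a :: applyAt f (n + 1) l
  | _, l => l

/-- `φ_u`: apply `φ` at the successive positions of `u`, leftmost entry of `u` first. -/
def applySeq (f : S → S → S × S) (u : List ℕ) (w : List S) : List S :=
  u.foldl (fun w i => applyAt f i w) w

/-- A word is `N`-normal iff all its length-two factors are `N`-normal. -/
def LocallyNormal (N : List S → List S) : Prop :=
  ∀ w : List S, N w = w ↔ ∀ u v : List S, ∀ s t : S, w = u ++ s :: t :: v → N [s, t] = [s, t]

/-- Every word is normalised by finitely many applications of `N̄` at positions. -/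
def NbarGenerated (N : List S → List S) : Prop :=
  ∀ w : List S, ∃ u : List ℕ, N w = applySeq (nbar N) u w

/-- A normalisation map is quadratic if it satisfies the two locality conditions. -/
def Quadratic (N : List S → List S) : Prop :=
  LocallyNormal N ∧ NbarGenerated N

/-- `e` is `N`-neutral: `N (w·e) = N (e·w) = N w · e`. -/
def Neutral (N : List S → List S) (e : S) : Prop :=
  ∀ w : List S, N (w ++ [e]) = N w ++ [e] ∧ N (e :: w) = N w ++ [e]

/-- The alternating sequence of length `m` starting with `k ∈ {1,2}`. -/
def altFrom : ℕ → ℕ → List ℕ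
  | _, 0 => []
  | k, n + 1 => k :: altFrom (3 - k) n

/-- `(S, N)` is of left-class `c`: `N = N̄_{α_c}` on length-three words. -/
def LeftClass (N : List S → List S) (c : ℕ) : Prop :=
  ∀ w : List S, w.length = 3 → N w = applySeq (nbar N) (altFrom 1 c) w

/-- `(S, N)` is of right-class `c`: `N = N̄_{ᾱ_c}` on length-three words. -/
def RightClass (N : List S → List S) (c : ℕ) : Prop :=
  ∀ w : List S, w.length = 3 → N w = applySeq (nbar N) (altFrom 2 c) w

/-- The domino rule is valid for `f`. -/
def DominoRule (f : S → S → S × S) : Prop :=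
  ∀ s₁ s₂ s₁' s₂' t₀ t₁ t₂ : S,
    f t₀ s₁ = (s₁', t₁) → f t₁ s₂ = (s₂', t₂) →
    f s₁ s₂ = (s₁, s₂) → f s₁' s₂' = (s₁', s₂')

/-- The sequences `δ_p`: `δ₁ = ε` and `δ_p = sh(δ_{p-1})·1·2·⋯·(p-1)`. -/
def delta : ℕ → List ℕ
  | 0 => []
  | 1 => []
  | p + 2 => (delta (p + 1)).map (· + 1) ++ List.range' 1 (p + 1)

/-- Apply `N` to the length-`k` factor beginning at (1-indexed) position `i`. -/
def applyFactorAt (N : List S → List S) (k : ℕ) : ℕ → List S → List S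
  | 0, w => w
  | i + 1, w => w.take i ++ N ((w.drop i).take k) ++ w.drop (i + k)

/-- Apply `N` to length-`k` factors at the successive positions of `u`. -/
def applyFactorSeq (N : List S → List S) (k : ℕ) (u : List ℕ) (w : List S) : List S :=
  u.foldl (fun w i => applyFactorAt N k i w) w

/-- One-step rewriting relation of a rewriting system `R`. -/
def RStep (R : List A → List A → Prop) (x y : List A) : Prop :=
  ∃ u v w w', R w w' ∧ x = u ++ w ++ v ∧ y = u ++ w' ++ v

/-- A rewriting system is terminating if it admits no infinite rewriting sequence. -/
def Terminating (R : List A → List A → Prop) : Prop :=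
  ¬ ∃ f : ℕ → List A, ∀ n, RStep R (f n) (f (n + 1))

/-- Confluence of a rewriting system. -/
def Confluent (R : List A → List A → Prop) : Prop :=
  ∀ w w₁ w₂ : List A, Relation.ReflTransGen (RStep R) w w₁ →
    Relation.ReflTransGen (RStep R) w w₂ →
    ∃ w', Relation.ReflTransGen (RStep R) w₁ w' ∧ Relation.ReflTransGen (RStep R) w₂ w'

/-- A word is `R`-normal if no rule of `R` applies to any of its factors. -/
def RNormal (R : List A → List A → Prop) (w : List A) : Prop :=
  ¬ ∃ w', RStep R w w'

/-- Every word rewrites to some `R`-normal word. -/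
def Normalising (R : List A → List A → Prop) : Prop :=
  ∀ w : List A, ∃ w', Relation.ReflTransGen (RStep R) w w' ∧ RNormal R w'

/-- A rewriting system is quadratic if all its rules relate length-two words. -/
def QuadraticRS (R : List A → List A → Prop) : Prop :=
  ∀ w w', R w w' → w.length = 2 ∧ w'.length = 2

/-- A rewriting system is reduced. -/
def ReducedRS (R : List A → List A → Prop) : Prop :=
  ∀ w w', R w w' → RNormal R w' ∧ RNormal (fun a b => R a b ∧ ¬(a = w ∧ b = w')) w

/-- The rewriting system associated with a quadratic normalisation:
one rule `s·t → N̄(s·t)` for each non-`N`-normal length-two word. -/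
def rules (N : List S → List S) : List S → List S → Prop :=
  fun w w' => ∃ s t : S, w = [s, t] ∧ w' = N [s, t] ∧ w' ≠ w

/-- `π_e`: delete all occurrences of `e`, landing in words over `S∖{e}`. -/
noncomputable def pie (e : S) (w : List S) : List {s : S // s ≠ e} :=
  w.filterMap fun s => @dite _ (s = e) (Classical.dec _) (fun _ => none) (fun h => some ⟨s, h⟩)

/-- The rewriting system `R_e` over `S∖{e}`. -/
def rulesE (N : List S → List S) (e : S) :
    List {s : S // s ≠ e} → List {s : S // s ≠ e} → Prop :=
  fun w w' => ∃ s t : {s : S // s ≠ e},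
    w = [s, t] ∧ N [s.1, t.1] ≠ [s.1, t.1] ∧ w' = pie e (N [s.1, t.1])

/-- `M` admits the monoid presentation `⟨S ∣ r⟩`. -/
def PresentedBy (M : Type*) [Monoid M] (S : Type*) (r : List S → List S → Prop) : Prop :=
  Nonempty ((conGen fun a b : FreeMonoid S => r a.toList b.toList).Quotient ≃* M)

/-- Left-divisibility in a monoid. -/
def LeftDvd {M : Type*} [Monoid M] (f g : M) : Prop :=
  ∃ g', f * g' = g

/-- The pair `s₁, s₂` is `S`-normal (greedy). -/
def SNormalPair {M : Type*} [Monoid M] (S : Set M) (s₁ s₂ : M) : Prop :=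
  ∀ s ∈ S, ∀ f : M, LeftDvd s (f * s₁ * s₂) → LeftDvd s (f * s₁)

/-- A word over `S` is `S`-normal if all its adjacent pairs are. -/
def SNormalWord {M : Type*} [Monoid M] (S : Set M) (w : List S) : Prop :=
  ∀ u v : List S, ∀ a b : S, w = u ++ a :: b :: v → SNormalPair S (a : M) (b : M)

end QN


namespace QNCore

variable {S : Type*}

/-- The f-level consequences of a quadratic normalisation of class (3,3). -/
structure Nice (f : S → S → S × S) : Prop where
  idem : ∀ a b : S, f (f a b).1 (f a b).2 = f a b
  t1 : ∀ x a b : S, (f (f x a).1 (f (f x a).2 b).1).1 = (f x (f a b).1).1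
  t2 : ∀ x a b : S, (f (f x a).1 (f (f x a).2 b).1).2 = (f (f x (f a b).1).2 (f a b).2).1
  t3 : ∀ x a b : S, (f (f x a).2 b).2 = (f (f x (f a b).1).2 (f a b).2).2

/-- If the inner pair is normal, consecutive push outputs form a normal pair. -/
theorem Nice.tri_pair {f : S → S → S × S} (N : Nice f) (x a b : S) (h : f a b = (a, b)) :
    f (f x a).1 (f (f x a).2 b).1 = ((f x a).1, (f (f x a).2 b).1) := by
  have h1 := N.t1 x a b
  have h2 := N.t2 x a b
  rw [h] at h1 h2
  exact Prod.ext (by simpa using h1) (by simpa using h2)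

/-- Push outputs. -/
def pOut (f : S → S → S × S) : S → List S → List S
  | _, [] => []
  | c, w :: ws => (f c w).1 :: pOut f (f c w).2 ws

/-- Push carry. -/
def pCar (f : S → S → S × S) : S → List S → S
  | c, [] => c
  | c, w :: ws => pCar f (f c w).2 ws

@[simp] theorem pOut_nil (f : S → S → S × S) (c : S) : pOut f c [] = [] := rfl
@[simp] theorem pOut_cons (f : S → S → S × S) (c w : S) (ws : List S) :
    pOut f c (w :: ws) = (f c w).1 :: pOut f (f c w).2 ws := rfl
@[simp] theorem pCar_nil (f : S → S → S × S) (c : S) : pCar f c [] = c := rfl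
@[simp] theorem pCar_cons (f : S → S → S × S) (c w : S) (ws : List S) :
    pCar f c (w :: ws) = pCar f (f c w).2 ws := rfl

theorem pOut_append (f : S → S → S × S) (c : S) (u v : List S) :
    pOut f c (u ++ v) = pOut f c u ++ pOut f (pCar f c u) v := by
  induction u generalizing c with
  | nil => simp
  | cons w ws ih => simp [ih]

theorem pCar_append (f : S → S → S × S) (c : S) (u v : List S) :
    pCar f c (u ++ v) = pCar f (pCar f c u) v := by
  induction u generalizing c with
  | nil => simp
  | cons w ws ih => simp [ih]

theorem pOut_eq_nil {f : S → S → S × S} {c : S} {u : List S} (h : pOut f c u = []) : u = [] := by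
  cases u with
  | nil => rfl
  | cons w ws => simp at h

/-- Locate a two-element factor inside push outputs. -/
theorem pOut_split2 {f : S → S → S × S} :
    ∀ (pre : List S) {d : S} {u : List S} {x y : S} {post : List S},
    pOut f d u = pre ++ x :: y :: post →
    ∃ upre α β upost, u = upre ++ α :: β :: upost ∧ pre = pOut f d upre ∧
      x = (f (pCar f d upre) α).1 ∧ y = (f (f (pCar f d upre) α).2 β).1 ∧
      post = pOut f (f (f (pCar f d upre) α).2 β).2 upost := by
  intro pre
  induction pre with
  | nil =>
    intro d u x y post h
    cases u with
    | nil => simp at h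
    | cons α u1 =>
      simp only [pOut_cons, List.nil_append, List.cons.injEq] at h
      obtain ⟨hx, h2⟩ := h
      cases u1 with
      | nil => simp at h2
      | cons β u2 =>
        simp only [pOut_cons, List.cons.injEq] at h2
        obtain ⟨hy, hpost⟩ := h2
        exact ⟨[], α, β, u2, by simp, by simp, by simp [hx], by simp [hy], hpost.symm⟩
  | cons z pre ih =>
    intro d u x y post h
    cases u with
    | nil => simp at h
    | cons α u1 =>
      simp only [pOut_cons, List.cons_append, List.cons.injEq] at h
      obtain ⟨hz, h2⟩ := h
      obtain ⟨upre, α', β, upost, hu, hpre, hx, hy, hpost⟩ := ih h2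
      exact ⟨α :: upre, α', β, upost, by simp [hu], by simp [hpre, hz], by simpa using hx,
        by simpa using hy, by simpa using hpost⟩

/-- Locate the last element of push outputs. -/
theorem pOut_split_last {f : S → S → S × S} :
    ∀ {d : S} {u : List S} {u' : List S} {y : S},
    pOut f d u = u' ++ [y] →
    ∃ urest β, u = urest ++ [β] ∧ u' = pOut f d urest ∧
      y = (f (pCar f d urest) β).1 ∧ pCar f d u = (f (pCar f d urest) β).2 := by
  intro d u
  induction u generalizing d with
  | nil => intro u' y h; simp at h
  | cons α u1 ih =>
    intro u' y h
    cases u1 with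
    | nil =>
      cases u' with
      | nil =>
        simp only [pOut_cons, pOut_nil, List.nil_append, List.cons.injEq] at h
        exact ⟨[], α, rfl, by simp, by simp [h.1], by simp⟩
      | cons z u'' =>
        exfalso
        simp only [pOut_cons, pOut_nil, List.cons_append, List.cons.injEq] at h
        exact List.append_ne_nil_of_right_ne_nil _ (List.cons_ne_nil _ _) h.2.symm
    | cons β u2 =>
      cases u' with
      | nil =>
        exfalso
        simp only [pOut_cons, List.nil_append, List.cons.injEq] at h
        exact List.cons_ne_nil _ _ h.2
      | cons z u'' =>
        simp only [pOut_cons, List.cons_append, List.cons.injEq] at h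
        obtain ⟨hz, h2⟩ := h
        obtain ⟨urest, β', hu, hu', hy, hc⟩ := ih h2
        exact ⟨α :: urest, β', by simp [hu], by simp [hu', hz], by simpa using hy,
          by simpa using hc⟩

/-- Bad configurations: can evolve (by internal and shrinking moves) to an
adjacent non-normal pair. -/
inductive Bads (f : S → S → S × S) : S → List S → S → Prop
  | base {a b : S} : f a b ≠ (a, b) → Bads f a [] b
  | int {a b : S} (pre post : List S) (x y : S) : f x y ≠ (x, y) →
      Bads f a (pre ++ (f x y).1 :: (f x y).2 :: post) b → Bads f a (pre ++ x :: y :: post) b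
  | left {a x : S} {u : List S} {b : S} : f a x ≠ (a, x) →
      Bads f (f a x).2 u b → Bads f a (x :: u) b
  | right {a : S} {u : List S} {y b : S} : f y b ≠ (y, b) →
      Bads f a u (f y b).1 → Bads f a (u ++ [y]) b

theorem not_bads_single {f : S → S → S × S} {a b : S} (h : ¬ Bads f a [] b) :
    f a b = (a, b) := by
  by_contra hne
  exact h (Bads.base hne)

theorem safe_int {f : S → S → S × S} {a b : S} {pre post : List S} {x y : S}
    (hs : ¬ Bads f a (pre ++ x :: y :: post) b) (hxy : f x y ≠ (x, y)) :
    ¬ Bads f a (pre ++ (f x y).1 :: (f x y).2 :: post) b :=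
  fun hb => hs (Bads.int pre post x y hxy hb)

theorem q_lemma {f : S → S → S × S} (N : Nice f) :
    ∀ {A U B}, Bads f A U B → ∀ c a u b, ¬ Bads f a u b → A = (f c a).1 →
      U = pOut f (f c a).2 u → B = (f (pCar f (f c a).2 u) b).1 → False := by
  intro A U B D
  induction D with
  | @base A B hne =>
    intro c a u b hsafe hA hU hB
    have hu : u = [] := pOut_eq_nil hU.symm
    subst hu
    have hab := not_bads_single hsafe
    have := N.tri_pair c a b hab
    rw [← hA] at this
    simp only [pCar_nil] at hB
    rw [← hB] at this
    exact hne this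
  | @int A B pre post x y hxy D' ih =>
    intro c a u b hsafe hA hU hB
    obtain ⟨upre, α, β, upost, hu, hpre, hx, hy, hpost⟩ := pOut_split2 pre hU.symm
    set t' := pCar f (f c a).2 upre with ht'
    by_cases hαβ : f α β = (α, β)
    · have := N.tri_pair t' α β hαβ
      rw [← hx, ← hy] at this
      exact hxy this
    · subst hu
      have hsafe' : ¬ Bads f a (upre ++ (f α β).1 :: (f α β).2 :: upost) b :=
        safe_int hsafe hαβ
      refine ih c a (upre ++ (f α β).1 :: (f α β).2 :: upost) b hsafe' hA ?_ ?_
      · -- middle matches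
        rw [pOut_append]
        simp only [pOut_cons]
        rw [← ht', hpre]
        have e1 : (f x y).1 = (f t' (f α β).1).1 := by
          rw [hx, hy]; exact N.t1 t' α β
        have e2 : (f x y).2 = (f (f t' (f α β).1).2 (f α β).2).1 := by
          rw [hx, hy]; exact N.t2 t' α β
        have e3 : (f (f t' α).2 β).2 = (f (f t' (f α β).1).2 (f α β).2).2 := N.t3 t' α β
        rw [e1, e2, hpost, e3]
      · -- right end matches
        rw [hB, pCar_append, pCar_append, ← ht']
        simp only [pCar_cons]
        rw [N.t3 t' α β]
  | @left A x' u'' B hax D' ih =>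
    intro c a u b hsafe hA hU hB
    cases u with
    | nil => simp at hU
    | cons α urest =>
      simp only [pOut_cons, List.cons.injEq] at hU
      obtain ⟨hx', hu''⟩ := hU
      by_cases haα : f a α = (a, α)
      · exact absurd (by rw [hx', hA]; exact N.tri_pair c a α haα) hax
      · have hsafe' : ¬ Bads f (f a α).2 urest b := fun hb => hsafe (Bads.left haα hb)
        refine ih (f c (f a α).1).2 (f a α).2 urest b hsafe' ?_ ?_ ?_
        · rw [hA, hx']; exact N.t2 c a α
        · rw [hu'']
          have e3 : (f (f c a).2 α).2 = (f (f c (f a α).1).2 (f a α).2).2 := N.t3 c a α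
          rw [e3]
        · rw [hB]
          simp only [pCar_cons]
          rw [N.t3 c a α]
  | @right A u'' y B hyb D' ih =>
    intro c a u b hsafe hA hU hB
    obtain ⟨urest, β, hu, hu'', hy, hc⟩ := pOut_split_last hU.symm
    set x0 := pCar f (f c a).2 urest with hx0
    by_cases hβb : f β b = (β, b)
    · have := N.tri_pair x0 β b hβb
      rw [← hy] at this
      rw [hB, hc] at hyb
      exact hyb this
    · subst hu
      have hsafe' : ¬ Bads f a urest (f β b).1 := fun hb => hsafe (Bads.right hβb hb)
      refine ih c a urest (f β b).1 hsafe' hA hu'' ?_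
      rw [hB, hc, hy, ← hx0]
      exact N.t1 x0 β b

theorem seg3 {α : Type*} : ∀ (pre : List α) {m₁ m₂ post : List α} {x y : α},
    m₁ ++ m₂ = pre ++ x :: y :: post →
    (∃ post₁, m₁ = pre ++ x :: y :: post₁ ∧ post = post₁ ++ m₂) ∨
    (∃ pre₂, pre = m₁ ++ pre₂ ∧ m₂ = pre₂ ++ x :: y :: post) ∨
    (m₁ = pre ++ [x] ∧ m₂ = y :: post) := by
  intro pre
  induction pre with
  | nil =>
    intro m₁ m₂ post x y h
    cases m₁ with
    | nil => exact Or.inr (Or.inl ⟨[], by simp, by simpa using h⟩)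
    | cons w m₁' =>
      cases m₁' with
      | nil =>
        simp only [List.cons_append, List.nil_append, List.cons.injEq] at h ⊢
        exact Or.inr (Or.inr ⟨by simp [h.1], h.2⟩)
      | cons w' m₁'' =>
        simp only [List.cons_append, List.nil_append, List.cons.injEq] at h
        obtain ⟨h1, h2, h3⟩ := h
        exact Or.inl ⟨m₁'', by simp [h1, h2], by simp [h3]⟩
  | cons z pre' ih =>
    intro m₁ m₂ post x y h
    cases m₁ with
    | nil => exact Or.inr (Or.inl ⟨z :: pre', by simp, by simpa using h⟩)
    | cons w m₁' =>
      simp only [List.cons_append, List.cons.injEq] at h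
      obtain ⟨h1, h2⟩ := h
      rcases ih h2 with ⟨post₁, ha, hb⟩ | ⟨pre₂, ha, hb⟩ | ⟨ha, hb⟩
      · exact Or.inl ⟨post₁, by simp [h1, ha], hb⟩
      · exact Or.inr (Or.inl ⟨pre₂, by simp [h1, ha], hb⟩)
      · exact Or.inr (Or.inr ⟨by simp [h1, ha], hb⟩)

theorem p_lemma {f : S → S → S × S} (N : Nice f) :
    ∀ {A U B}, Bads f A U B → ∀ c a w u₂ b, ¬ Bads f a (w ++ u₂) b → A = (f c a).1 →
      U = pOut f (f c a).2 w ++ pCar f (f c a).2 w :: u₂ → B = b → False := by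
  intro A U B D
  induction D with
  | @base A B hne =>
    intro c a w u₂ b hsafe hA hU hB
    exact List.append_ne_nil_of_right_ne_nil _ (List.cons_ne_nil _ _) hU.symm
  | @int A B pre post x y hxy D' ih =>
    intro c a w u₂ b hsafe hA hU hB
    set d := (f c a).2 with hd
    rcases seg3 pre hU.symm with ⟨post₁, hm₁, hpost⟩ | ⟨pre₂, hpre, hm₂⟩ | ⟨hm₁, hm₂⟩
    · -- redex inside the pushed outputs
      obtain ⟨wpre, α, β, wpost, hw, hpre', hx, hy, hpost₁⟩ := pOut_split2 pre hm₁
      set t' := pCar f d wpre with ht'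
      by_cases hαβ : f α β = (α, β)
      · have := N.tri_pair t' α β hαβ
        rw [← hx, ← hy] at this
        exact hxy this
      · subst hw
        have hsafe' : ¬ Bads f a ((wpre ++ (f α β).1 :: (f α β).2 :: wpost) ++ u₂) b := by
          intro hb
          apply hsafe
          have : (wpre ++ α :: β :: wpost) ++ u₂ = wpre ++ α :: β :: (wpost ++ u₂) := by simp
          rw [this]
          refine Bads.int wpre (wpost ++ u₂) α β hαβ ?_
          simpa using hb
        refine ih c a (wpre ++ (f α β).1 :: (f α β).2 :: wpost) u₂ b hsafe' hA ?_ hB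
        have e1 : (f x y).1 = (f t' (f α β).1).1 := by rw [hx, hy]; exact N.t1 t' α β
        have e2 : (f x y).2 = (f (f t' (f α β).1).2 (f α β).2).1 := by
          rw [hx, hy]; exact N.t2 t' α β
        have e3 : (f (f t' α).2 β).2 = (f (f t' (f α β).1).2 (f α β).2).2 := N.t3 t' α β
        rw [hpost, hpost₁, hpre', e1, e2, pOut_append, pCar_append]
        simp only [pOut_cons, pCar_cons, ← ht']
        rw [e3, pCar_append]
        simp
        rfl
    · -- redex inside carry :: u₂
      cases pre₂ with
      | nil =>
        -- deepen the push
        simp only [List.nil_append, List.cons.injEq] at hm₂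
        obtain ⟨hx, hu₂⟩ := hm₂
        have hsafe' : ¬ Bads f a ((w ++ [y]) ++ post) b := by
          rw [List.append_assoc]
          simpa [← hu₂] using hsafe
        refine ih c a (w ++ [y]) post b hsafe' hA ?_ hB
        rw [hpre, List.append_nil, pOut_append, pCar_append, ← hx]
        simp
        rfl
      | cons z pre₂' =>
        simp only [List.cons_append, List.cons.injEq] at hm₂
        obtain ⟨hz, hu₂⟩ := hm₂
        have hsafe' : ¬ Bads f a (w ++ (pre₂' ++ (f x y).1 :: (f x y).2 :: post)) b := by
          intro hb
          apply hsafe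
          rw [hu₂, show w ++ (pre₂' ++ x :: y :: post) = (w ++ pre₂') ++ x :: y :: post by simp]
          refine Bads.int (w ++ pre₂') post x y hxy ?_
          simpa using hb
        refine ih c a w (pre₂' ++ (f x y).1 :: (f x y).2 :: post) b hsafe' hA ?_ hB
        rw [hpre, hz]
        simp
        rfl
    · -- redex straddles: last output and carry form an f-image pair
      obtain ⟨wrest, β, hw, hu'', hx, hc⟩ := pOut_split_last hm₁
      apply hxy
      have hy2 : pCar f d w = y := by
        have := hm₂
        simp only [List.cons.injEq] at this
        exact this.1
      rw [← hy2, hx, hc]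
      exact N.idem (pCar f d wrest) β
  | @left A x' u'' B hax D' ih =>
    intro c a w u₂ b hsafe hA hU hB
    cases w with
    | nil =>
      simp only [pOut_nil, pCar_nil, List.nil_append, List.cons.injEq] at hU
      apply hax
      rw [hA, hU.1]
      have : ((f c a).1, (f c a).2) = f c a := rfl
      rw [this]
      exact N.idem c a
    | cons α wrest =>
      simp only [pOut_cons, pCar_cons, List.cons_append, List.cons.injEq] at hU
      obtain ⟨hx', hu''⟩ := hU
      by_cases haα : f a α = (a, α)
      · exact absurd (by rw [hx', hA]; exact N.tri_pair c a α haα) hax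
      · have hsafe' : ¬ Bads f (f a α).2 (wrest ++ u₂) b := by
          intro hb
          apply hsafe
          exact Bads.left haα hb
        refine ih (f c (f a α).1).2 (f a α).2 wrest u₂ b hsafe' ?_ ?_ hB
        · rw [hA, hx']; exact N.t2 c a α
        · rw [hu'']
          have e3 : (f (f c a).2 α).2 = (f (f c (f a α).1).2 (f a α).2).2 := N.t3 c a α
          rw [e3]
  | @right A u'' y B hyb D' ih =>
    intro c a w u₂ b hsafe hA hU hB
    subst hB
    rcases List.eq_nil_or_concat u₂ with hu₂ | ⟨u₂', γ, hu₂⟩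
    · -- the push has reached the right end: a Q-state
      subst hu₂
      have hU' : u'' ++ [y] = pOut f (f c a).2 w ++ [pCar f (f c a).2 w] := by
        simpa using hU
      obtain ⟨h1, h2⟩ := List.append_inj' hU' rfl
      have hy : y = pCar f (f c a).2 w := by
        simp only [List.cons.injEq] at h2
        exact h2.1
      have hsafe' : ¬ Bads f a w B := by simpa using hsafe
      exact q_lemma N D' c a w B hsafe' hA h1 (by rw [hy])
    · rw [List.concat_eq_append] at hu₂
      subst hu₂
      have hU' : u'' ++ [y] = (pOut f (f c a).2 w ++ pCar f (f c a).2 w :: u₂') ++ [γ] := by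
        simpa using hU
      obtain ⟨h1, h2⟩ := List.append_inj' hU' rfl
      have hy : y = γ := by
        simp only [List.cons.injEq] at h2
        exact h2.1
      subst hy
      have hsafe' : ¬ Bads f a (w ++ u₂') (f y B).1 := by
        intro hb
        apply hsafe
        have : w ++ (u₂' ++ [y]) = (w ++ u₂') ++ [y] := by simp
        rw [this]
        exact Bads.right hyb hb
      exact ih c a w u₂' (f y B).1 hsafe' hA h1 rfl

theorem grow_left {f : S → S → S × S} (N : Nice f) {a : S} {u : List S} {b : S}
    (h : ¬ Bads f a u b) (c : S) : ¬ Bads f (f c a).1 ((f c a).2 :: u) b :=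
  fun D => p_lemma N D c a [] u b (by simpa using h) rfl (by simp) rfl

/-- The mirror image of a pair rewriting map. -/
def fm (f : S → S → S × S) : S → S → S × S := fun x y => ((f y x).2, (f y x).1)

theorem fm_fm (f : S → S → S × S) : fm (fm f) = f := by
  funext x y
  simp [fm]

theorem fm_eq_iff {f : S → S → S × S} {x y : S} : fm f x y = (x, y) ↔ f y x = (y, x) := by
  constructor
  · intro h
    have h1 : (f y x).2 = x := congrArg Prod.fst h
    have h2 : (f y x).1 = y := congrArg Prod.snd h
    exact Prod.ext h2 h1
  · intro h
    simp [fm, h]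

theorem Nice.mirror {f : S → S → S × S} (N : Nice f) : Nice (fm f) := by
  constructor
  · intro a b
    simp only [fm]
    have := N.idem b a
    rw [this]
  · intro x a b
    simp only [fm]
    exact (N.t3 b a x).symm
  · intro x a b
    simp only [fm]
    exact (N.t2 b a x).symm
  · intro x a b
    simp only [fm]
    exact (N.t1 b a x).symm

theorem bads_mirror {f : S → S → S × S} :
    ∀ {a : S} {u : List S} {b : S}, Bads (fm f) a u b → Bads f b u.reverse a := by
  intro a u b D
  induction D with
  | @base a b hne =>
    exact Bads.base (fun h => hne (fm_eq_iff.mpr h))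
  | @int a b pre post x y hxy D' ih =>
    have hxy' : f y x ≠ (y, x) := fun h => hxy (fm_eq_iff.mpr h)
    have : (pre ++ x :: y :: post).reverse = post.reverse ++ y :: x :: pre.reverse := by simp
    rw [this]
    have h2 : (pre ++ (fm f x y).1 :: (fm f x y).2 :: post).reverse
        = post.reverse ++ (f y x).1 :: (f y x).2 :: pre.reverse := by simp [fm]
    rw [h2] at ih
    exact Bads.int post.reverse pre.reverse y x hxy' ih
  | @left a x u b hax D' ih =>
    have hax' : f x a ≠ (x, a) := fun h => hax (fm_eq_iff.mpr h)
    have : (x :: u).reverse = u.reverse ++ [x] := by simp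
    rw [this]
    have h2 : (fm f a x).2 = (f x a).1 := rfl
    rw [h2] at ih
    exact Bads.right hax' ih
  | @right a u y b hyb D' ih =>
    have hyb' : f b y ≠ (b, y) := fun h => hyb (fm_eq_iff.mpr h)
    have : (u ++ [y]).reverse = y :: u.reverse := by simp
    rw [this]
    have h2 : (fm f y b).1 = (f b y).2 := rfl
    rw [h2] at ih
    exact Bads.left hyb' ih

theorem bads_mirror_iff {f : S → S → S × S} {a : S} {u : List S} {b : S} :
    Bads (fm f) a u b ↔ Bads f b u.reverse a := by
  constructor
  · exact bads_mirror
  · intro h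
    have := @bads_mirror _ (fm f) b u.reverse a (by rw [fm_fm]; exact h)
    simpa using this

theorem grow_right {f : S → S → S × S} (N : Nice f) {a : S} {u : List S} {b : S}
    (h : ¬ Bads f a u b) (c : S) : ¬ Bads f a (u ++ [(f b c).1]) (f b c).2 := by
  intro D
  have hmm : Bads (fm f) (fm f c b).1 ((fm f c b).2 :: u.reverse) a := by
    rw [bads_mirror_iff]
    have e1 : (fm f c b).1 = (f b c).2 := rfl
    have e2 : (fm f c b).2 = (f b c).1 := rfl
    rw [e1, e2]
    simpa using D
  have hsafe : ¬ Bads (fm f) b u.reverse a := by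
    intro hb
    exact h (by simpa using bads_mirror_iff.mp hb)
  exact grow_left N.mirror hsafe c hmm

theorem bads_ne_of_nil {f : S → S → S × S} {a b : S} {u : List S} (D : Bads f a u b)
    (hu : u = []) : f a b ≠ (a, b) := by
  induction D with
  | base hne => exact hne
  | int pre post x y hxy D' ih =>
    exact absurd hu (List.append_ne_nil_of_right_ne_nil pre (List.cons_ne_nil _ _))
  | left hax D' ih => exact absurd hu (List.cons_ne_nil _ _)
  | right hyb D' ih =>
    exact absurd hu (List.append_ne_nil_of_right_ne_nil _ (List.cons_ne_nil _ _))

theorem not_bads_of_normal {f : S → S → S × S} {a b : S} (h : f a b = (a, b)) :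
    ¬ Bads f a [] b := fun D => bads_ne_of_nil D rfl h

/-- A labelled rewriting step: apply `f` to an adjacent pair and swap the labels. -/
def LStep (f : S → S → S × S) (M M' : List (ℕ × S)) : Prop :=
  ∃ (A B : List (ℕ × S)) (i j : ℕ) (s t : S), f s t ≠ (s, t) ∧
    M = A ++ (i, s) :: (j, t) :: B ∧ M' = A ++ (j, (f s t).1) :: (i, (f s t).2) :: B

/-- The master invariant: the letters at any inverted pair of labels form a
configuration that cannot evolve to an adjacent non-normal pair. -/
def Inv (f : S → S → S × S) (M : List (ℕ × S)) : Prop :=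
  ∀ (A B C : List (ℕ × S)) (i j : ℕ) (s t : S),
    M = A ++ (i, s) :: B ++ (j, t) :: C → j < i → ¬ Bads f s (B.map Prod.snd) t

def InvAt (f : S → S → S × S) (p : ℕ × S) (M : List (ℕ × S)) : Prop :=
  ∀ (B C : List (ℕ × S)) (j : ℕ) (t : S),
    M = B ++ (j, t) :: C → j < p.1 → ¬ Bads f p.2 (B.map Prod.snd) t

theorem inv_nil (f : S → S → S × S) : Inv f [] := by
  intro A B C i j s t h
  exact absurd h (by simp)

theorem inv_cons_iff {f : S → S → S × S} {p : ℕ × S} {M : List (ℕ × S)} :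
    Inv f (p :: M) ↔ InvAt f p M ∧ Inv f M := by
  constructor
  · intro h
    constructor
    · intro B C j t hM hj
      exact h [] B C p.1 j p.2 t (by simp [hM]) hj
    · intro A B C i j s t hM hj
      exact h (p :: A) B C i j s t (by simp [hM]) hj
  · rintro ⟨h1, h2⟩ A B C i j s t hM hj
    cases A with
    | nil =>
      rw [List.nil_append] at hM
      injection hM with hp hM2
      subst hp
      exact h1 B C j t hM2 hj
    | cons q A' =>
      rw [List.cons_append] at hM
      injection hM with hq hM2
      exact h2 A' B C i j s t hM2 hj

/-- Locate a single marked cell relative to a two-cell factor. -/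
theorem loc1 {α : Type*} : ∀ (P : List α) {B C Q : List α} {q c₁ c₂ : α},
    B ++ q :: C = P ++ c₁ :: c₂ :: Q →
    (∃ B₂, P = B ++ q :: B₂) ∨
    (B = P ∧ q = c₁ ∧ C = c₂ :: Q) ∨
    (B = P ++ [c₁] ∧ q = c₂ ∧ C = Q) ∨
    (∃ B₂, B = P ++ c₁ :: c₂ :: B₂ ∧ Q = B₂ ++ q :: C) := by
  intro P
  induction P with
  | nil =>
    intro B C Q q c₁ c₂ h
    cases B with
    | nil =>
      simp only [List.nil_append, List.cons.injEq] at h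
      exact Or.inr (Or.inl ⟨rfl, h.1, h.2⟩)
    | cons b B' =>
      simp only [List.nil_append, List.cons_append, List.cons.injEq] at h
      obtain ⟨hb, h2⟩ := h
      cases B' with
      | nil =>
        simp only [List.nil_append, List.cons.injEq] at h2
        exact Or.inr (Or.inr (Or.inl ⟨by simp [hb], h2.1, h2.2⟩))
      | cons b' B'' =>
        simp only [List.cons_append, List.cons.injEq] at h2
        exact Or.inr (Or.inr (Or.inr ⟨B'', by simp [hb, h2.1], h2.2.symm⟩))
  | cons z P' ih =>
    intro B C Q q c₁ c₂ h
    cases B with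
    | nil =>
      simp only [List.nil_append, List.cons_append, List.cons.injEq] at h
      exact Or.inl ⟨P', by simp [h.1]⟩
    | cons b B' =>
      simp only [List.cons_append, List.cons.injEq] at h
      obtain ⟨hb, h2⟩ := h
      rcases ih h2 with ⟨B₂, hP⟩ | ⟨hh1, hh2, hh3⟩ | ⟨hh1, hh2, hh3⟩ | ⟨B₂, hh1, hh2⟩
      · exact Or.inl ⟨B₂, by simp [hb, hP]⟩
      · exact Or.inr (Or.inl ⟨by simp [hb, hh1], hh2, hh3⟩)
      · exact Or.inr (Or.inr (Or.inl ⟨by simp [hb, hh1], hh2, hh3⟩))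
      · exact Or.inr (Or.inr (Or.inr ⟨B₂, by simp [hb, hh1], hh2⟩))

theorem inv_step {f : S → S → S × S} (N : Nice f) :
    ∀ {M M' : List (ℕ × S)}, Inv f M → LStep f M M' → Inv f M' := by
  have main : ∀ (P : List (ℕ × S)) (Q : List (ℕ × S)) (i j : ℕ) (s t : S),
      f s t ≠ (s, t) → Inv f (P ++ (i, s) :: (j, t) :: Q) →
      Inv f (P ++ (j, (f s t).1) :: (i, (f s t).2) :: Q) := by
    intro P
    induction P with
    | nil =>
      intro Q i j s t hne hI
      simp only [List.nil_append] at hI ⊢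
      rw [inv_cons_iff] at hI
      obtain ⟨h1, hI⟩ := hI
      rw [inv_cons_iff] at hI
      obtain ⟨h2, hI⟩ := hI
      rw [inv_cons_iff, inv_cons_iff]
      refine ⟨?_, ?_, hI⟩
      · -- new head (j, s') against the rest
        intro B C y b hM hy
        cases B with
        | nil =>
          rw [List.nil_append] at hM
          injection hM with hc hM2
          injection hc with hc1 hc2
          subst hc2
          exact not_bads_of_normal (by rw [N.idem s t])
        | cons c B' =>
          rw [List.cons_append] at hM
          injection hM with hc hM2
          subst hc
          have hold := h2 B' C y b hM2 hy
          have := grow_left N hold s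
          simpa using this
      · -- new second cell (i, t') against the rest
        intro B C y b hM hy
        have hold := h1 ((j, t) :: B) C y b (by simp [hM]) hy
        intro hb
        exact hold (by simpa using Bads.left hne hb)
    | cons z P' ih =>
      intro Q i j s t hne hI
      simp only [List.cons_append] at hI ⊢
      rw [inv_cons_iff] at hI ⊢
      obtain ⟨h1, hI⟩ := hI
      refine ⟨?_, ih Q i j s t hne hI⟩
      intro B C y b hM hy
      rcases loc1 P' hM.symm with ⟨B₂, hP⟩ | ⟨hB, hq, hC⟩ | ⟨hB, hq, hC⟩ | ⟨B₂, hB, hQ⟩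
      · -- target inside P'
        exact h1 B (B₂ ++ (i, s) :: (j, t) :: Q) y b (by simp [hP]) hy
      · -- target is the new left cell (j, s')
        injection hq with hq1 hq2
        subst hq1
        subst hq2
        subst hB
        have hold := h1 (B ++ [(i, s)]) Q y t (by simp) hy
        intro hb
        apply hold
        have e : (B ++ [(i, s)]).map Prod.snd = B.map Prod.snd ++ [s] := by simp
        rw [e]
        exact Bads.right hne hb
      · -- target is the new right cell (i, t')
        injection hq with hq1 hq2
        subst hq1
        subst hq2
        subst hB
        have hold := h1 P' ((j, t) :: Q) y s (by simp) hy
        have hgrow := grow_right N hold t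
        simpa using hgrow
      · -- target inside Q
        subst hB
        have hold := h1 (P' ++ (i, s) :: (j, t) :: B₂) C y b (by simp [hQ]) hy
        intro hb
        apply hold
        have e1 : (P' ++ (i, s) :: (j, t) :: B₂).map Prod.snd
            = P'.map Prod.snd ++ s :: t :: B₂.map Prod.snd := by simp
        rw [e1]
        refine Bads.int _ _ s t hne ?_
        have e2 : (P' ++ (j, (f s t).1) :: (i, (f s t).2) :: B₂).map Prod.snd
            = P'.map Prod.snd ++ (f s t).1 :: (f s t).2 :: B₂.map Prod.snd := by simp
        rw [← e2]
        simpa using hb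
  rintro M M' hI ⟨A, B, i, j, s, t, hne, hM, hM'⟩
  subst hM hM'
  exact main A B i j s t hne hI

/-- Number of label inversions. -/
def icount : List (ℕ × S) → ℕ
  | [] => 0
  | p :: M => M.countP (fun q => decide (q.1 < p.1)) + icount M

theorem icount_nil : icount ([] : List (ℕ × S)) = 0 := rfl
theorem icount_cons (p : ℕ × S) (M : List (ℕ × S)) :
    icount (p :: M) = M.countP (fun q => decide (q.1 < p.1)) + icount M := rfl

theorem icount_swap (i j : ℕ) (s t s' t' : S) (hij : i < j) :
    ∀ (A : List (ℕ × S)) (B : List (ℕ × S)),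
    icount (A ++ (j, s') :: (i, t') :: B) = icount (A ++ (i, s) :: (j, t) :: B) + 1 := by
  intro A
  induction A with
  | nil =>
    intro B
    have hji : ¬ (j < i) := by omega
    simp only [List.nil_append, icount_cons, List.countP_cons]
    simp [hij, hji]
    omega
  | cons q A' ih =>
    intro B
    simp only [List.cons_append, icount_cons, List.countP_append, List.countP_cons]
    rw [ih B]
    omega

theorem countP_le_len {p : ℕ × S → Bool} (M : List (ℕ × S)) : M.countP p ≤ M.length :=
  List.countP_le_length

theorem icount_le (M : List (ℕ × S)) : 2 * icount M ≤ M.length * (M.length - 1) := by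
  induction M with
  | nil => simp [icount]
  | cons p M ih =>
    have h1 : M.countP (fun q => decide (q.1 < p.1)) ≤ M.length := countP_le_len M
    simp only [icount, List.length_cons]
    cases hM : M.length with
    | zero =>
      have : M = [] := List.length_eq_zero_iff.mp hM
      subst this
      simp [icount]
    | succ m =>
      rw [hM] at ih h1
      have e : (m + 1 + 1) * (m + 1 + 1 - 1) = 2 * (m + 1) + (m + 1) * (m + 1 - 1) := by
        simp only [Nat.add_sub_cancel]
        ring
      rw [e]
      omega

theorem icount_zero_of_pairwise {M : List (ℕ × S)}
    (h : (M.map Prod.fst).Pairwise (· < ·)) : icount M = 0 := by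
  induction M with
  | nil => rfl
  | cons p M ih =>
    simp only [List.map_cons, List.pairwise_cons] at h
    simp only [icount]
    rw [ih h.2, List.countP_eq_zero.mpr, Nat.add_zero]
    intro q hq
    have := h.1 q.1 (List.mem_map_of_mem (f := Prod.fst) hq)
    simpa using Nat.not_lt.mpr (Nat.le_of_lt this)

theorem inv_of_pairwise {f : S → S → S × S} {M : List (ℕ × S)}
    (h : (M.map Prod.fst).Pairwise (· < ·)) : Inv f M := by
  intro A B C i j s t hM hj
  exfalso
  rw [hM] at h
  simp only [List.map_append, List.map_cons] at h
  have hsub : [i, j].Sublist (List.map Prod.fst A ++ i :: (List.map Prod.fst B ++ j :: List.map Prod.fst C)) := by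
    refine List.Sublist.trans ?_ (List.sublist_append_right _ _)
    refine List.Sublist.cons₂ i ?_
    refine List.Sublist.trans ?_ (List.sublist_append_right _ _)
    exact List.Sublist.cons₂ j (List.nil_sublist _)
  have hp : List.Pairwise (· < ·) [i, j] := h.sublist (by simpa using hsub)
  have : i < j := by simpa using hp
  omega

/-- Steps on plain words. -/
def WStep (f : S → S → S × S) (w w' : List S) : Prop :=
  ∃ (u v : List S) (s t : S), f s t ≠ (s, t) ∧
    w = u ++ s :: t :: v ∧ w' = u ++ (f s t).1 :: (f s t).2 :: v

theorem map_snd_split : ∀ (u : List S) {M : List (ℕ × S)} {s t : S} {v : List S},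
    M.map Prod.snd = u ++ s :: t :: v →
    ∃ (A B : List (ℕ × S)) (i j : ℕ), M = A ++ (i, s) :: (j, t) :: B ∧
      A.map Prod.snd = u ∧ B.map Prod.snd = v := by
  intro u
  induction u with
  | nil =>
    intro M s t v h
    cases M with
    | nil => simp at h
    | cons c M1 =>
      cases M1 with
      | nil =>
        simp only [List.map_cons, List.map_nil, List.nil_append, List.cons.injEq] at h
        exact absurd h.2.symm (List.cons_ne_nil _ _)
      | cons c2 B =>
        simp only [List.map_cons, List.nil_append, List.cons.injEq] at h
        obtain ⟨h1, h2, h3⟩ := h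
        refine ⟨[], B, c.1, c2.1, ?_, rfl, h3⟩
        rw [List.nil_append]
        rw [show (c.1, s) = c from by rw [← h1], show (c2.1, t) = c2 from by rw [← h2]]
  | cons a u' ih =>
    intro M s t v h
    cases M with
    | nil => simp at h
    | cons c M1 =>
      simp only [List.map_cons, List.cons_append, List.cons.injEq] at h
      obtain ⟨h1, h2⟩ := h
      obtain ⟨A, B, i, j, hM, hA, hB⟩ := ih h2
      exact ⟨c :: A, B, i, j, by simp [hM], by simp [hA, h1], hB⟩

theorem lstep_length {f : S → S → S × S} {M M' : List (ℕ × S)} (h : LStep f M M') :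
    M'.length = M.length := by
  obtain ⟨A, B, i, j, s, t, _, hM, hM'⟩ := h
  simp [hM, hM']

theorem lstep_perm_fst {f : S → S → S × S} {M M' : List (ℕ × S)} (h : LStep f M M') :
    (M'.map Prod.fst).Perm (M.map Prod.fst) := by
  obtain ⟨A, B, i, j, s, t, _, hM, hM'⟩ := h
  simp only [hM, hM', List.map_append, List.map_cons]
  exact List.Perm.append_left _ (List.Perm.swap i j _)

theorem lstep_lt {f : S → S → S × S} {M : List (ℕ × S)}
    (hnd : (M.map Prod.fst).Nodup) (hI : Inv f M)
    {A B : List (ℕ × S)} {i j : ℕ} {s t : S} (hne : f s t ≠ (s, t))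
    (hM : M = A ++ (i, s) :: (j, t) :: B) : i < j := by
  have hne2 : i ≠ j := by
    have hsub : [i, j].Sublist (M.map Prod.fst) := by
      rw [hM]
      simp only [List.map_append, List.map_cons]
      refine List.Sublist.trans ?_ (List.sublist_append_right _ _)
      exact List.Sublist.cons₂ i (List.Sublist.cons₂ j (List.nil_sublist _))
    have := hnd.sublist hsub
    simpa using this
  have hnot : ¬ j < i := by
    intro hj
    exact hI A [] B i j s t (by simpa using hM) hj (Bads.base hne)
  omega

theorem icount_lstep {f : S → S → S × S} {M M' : List (ℕ × S)}
    (hnd : (M.map Prod.fst).Nodup) (hI : Inv f M) (h : LStep f M M') :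
    icount M' = icount M + 1 := by
  obtain ⟨A, B, i, j, s, t, hne, hM, hM'⟩ := h
  have hij : i < j := lstep_lt hnd hI hne hM
  rw [hM, hM']
  exact icount_swap i j s t (f s t).1 (f s t).2 hij A B

theorem chain_states {f : S → S → S × S} (N : Nice f) (g : ℕ → List S) :
    ∀ k, (∀ m < k, WStep f (g m) (g (m + 1))) →
    ∃ M : List (ℕ × S), M.map Prod.snd = g k ∧ (M.map Prod.fst).Nodup ∧ Inv f M ∧
      icount M = k ∧ M.length = (g 0).length := by
  intro k
  induction k with
  | zero =>
    intro _
    refine ⟨(List.range (g 0).length).zip (g 0), ?_, ?_, ?_, ?_, ?_⟩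
    · exact List.map_snd_zip (by simp)
    · rw [List.map_fst_zip (by simp)]
      exact List.nodup_range
    · apply inv_of_pairwise
      rw [List.map_fst_zip (by simp)]
      exact List.pairwise_lt_range
    · apply icount_zero_of_pairwise
      rw [List.map_fst_zip (by simp)]
      exact List.pairwise_lt_range
    · simp
  | succ k ih =>
    intro hsteps
    obtain ⟨M, hsnd, hnd, hI, hic, hlen⟩ := ih (fun m hm => hsteps m (Nat.lt_succ_of_lt hm))
    obtain ⟨u, v, s, t, hne, hw, hw'⟩ := hsteps k (Nat.lt_succ_self k)
    obtain ⟨A, B, i, j, hM, hA, hB⟩ := map_snd_split u (by rw [hsnd, hw])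
    set M' := A ++ (j, (f s t).1) :: (i, (f s t).2) :: B with hM'
    have hstep : LStep f M M' := ⟨A, B, i, j, s, t, hne, hM, rfl⟩
    refine ⟨M', ?_, ?_, inv_step N hI hstep, ?_, ?_⟩
    · rw [hM']
      simp only [List.map_append, List.map_cons]
      rw [hA, hB, hw']
    · exact ((lstep_perm_fst hstep).nodup_iff).mpr hnd
    · rw [icount_lstep hnd hI hstep, hic]
    · rw [lstep_length hstep, hlen]

theorem wchain_bound {f : S → S → S × S} (N : Nice f) (g : ℕ → List S) (l : ℕ)
    (h : ∀ m < l, WStep f (g m) (g (m + 1))) :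
    2 * l ≤ (g 0).length * ((g 0).length - 1) := by
  obtain ⟨M, _, _, _, hic, hlen⟩ := chain_states N g l h
  have := icount_le M
  rw [hic, hlen] at this
  exact this

end QNCore

namespace QNBridge
open QN QNCore

variable {S : Type*} (ns : Normalisation S)

theorem N_pair (s t : S) : ns.N [s, t] = [(nbar ns.N s t).1, (nbar ns.N s t).2] := by
  have hlen : (ns.N [s, t]).length = 2 := ns.length_eq [s, t]
  obtain ⟨x, l, hx⟩ : ∃ x l, ns.N [s, t] = x :: l := by
    cases h : ns.N [s, t] with
    | nil => rw [h] at hlen; simp at hlen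
    | cons x l => exact ⟨x, l, rfl⟩
  obtain ⟨y, l2, hy⟩ : ∃ y l2, l = y :: l2 := by
    cases l with
    | nil => rw [hx] at hlen; simp at hlen
    | cons y l2 => exact ⟨y, l2, rfl⟩
  have hl2 : l2 = [] := by
    rw [hx, hy] at hlen
    simpa using hlen
  subst hy hl2
  rw [nbar, hx, pairOf]

theorem N_idem (w : List S) : ns.N (ns.N w) = ns.N w := by
  have := ns.mid [] [] w
  simpa using this

theorem nbar_idem (s t : S) :
    nbar ns.N (nbar ns.N s t).1 (nbar ns.N s t).2 = nbar ns.N s t := by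
  have h1 : ns.N [(nbar ns.N s t).1, (nbar ns.N s t).2] = [(nbar ns.N s t).1, (nbar ns.N s t).2] := by
    conv_lhs => rw [← N_pair ns s t]
    rw [N_idem, N_pair]
  rw [nbar, h1, pairOf]

theorem nbar_ne_iff (s t : S) : nbar ns.N s t ≠ (s, t) ↔ ns.N [s, t] ≠ [s, t] := by
  rw [N_pair ns s t]
  constructor
  · intro h he
    apply h
    have h1 := ((List.cons.injEq _ _ _ _).mp he).1
    have h2 := ((List.cons.injEq _ _ _ _).mp ((List.cons.injEq _ _ _ _).mp he).2).1
    exact Prod.ext h1 h2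
  · intro h he
    apply h
    rw [he]

theorem applySeq_121 (x a b : S) (f : S → S → S × S) :
    applySeq f [1, 2, 1] [x, a, b] =
      [(f (f x a).1 (f (f x a).2 b).1).1, (f (f x a).1 (f (f x a).2 b).1).2, (f (f x a).2 b).2] := rfl

theorem applySeq_212 (x a b : S) (f : S → S → S × S) :
    applySeq f [2, 1, 2] [x, a, b] =
      [(f x (f a b).1).1, (f (f x (f a b).1).2 (f a b).2).1, (f (f x (f a b).1).2 (f a b).2).2] := rfl

theorem altFrom_13 : altFrom 1 3 = [1, 2, 1] := rfl
theorem altFrom_23 : altFrom 2 3 = [2, 1, 2] := rfl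

theorem nice_of_class33 (hl : LeftClass ns.N 3) (hr : RightClass ns.N 3) :
    Nice (nbar ns.N) := by
  set f := nbar ns.N with hf
  have key : ∀ x a b : S,
      applySeq f [1, 2, 1] [x, a, b] = applySeq f [2, 1, 2] [x, a, b] := by
    intro x a b
    rw [← altFrom_13, ← altFrom_23]
    rw [← hl [x, a, b] rfl, ← hr [x, a, b] rfl]
  constructor
  · intro a b
    exact nbar_idem ns a b
  · intro x a b
    have := key x a b
    rw [applySeq_121, applySeq_212] at this
    exact (List.cons.injEq _ _ _ _).mp this |>.1
  · intro x a b
    have := key x a b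
    rw [applySeq_121, applySeq_212] at this
    have h2 := ((List.cons.injEq _ _ _ _).mp this).2
    exact ((List.cons.injEq _ _ _ _).mp h2).1
  · intro x a b
    have := key x a b
    rw [applySeq_121, applySeq_212] at this
    have h2 := ((List.cons.injEq _ _ _ _).mp this).2
    have h3 := ((List.cons.injEq _ _ _ _).mp h2).2
    exact ((List.cons.injEq _ _ _ _).mp h3).1

theorem rstep_iff_wstep (x y : List S) :
    RStep (rules ns.N) x y ↔ WStep (nbar ns.N) x y := by
  constructor
  · rintro ⟨u, v, w, w', ⟨s, t, hw, hw', hne⟩, hx, hy⟩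
    refine ⟨u, v, s, t, ?_, ?_, ?_⟩
    · rw [nbar_ne_iff]
      rw [hw] at hne
      exact fun h => hne (by rw [hw', h])
    · rw [hx, hw]; simp
    · rw [hy, hw', N_pair ns s t]; simp
  · rintro ⟨u, v, s, t, hne, hx, hy⟩
    refine ⟨u, v, [s, t], ns.N [s, t], ⟨s, t, rfl, rfl, ?_⟩, by simpa using hx, ?_⟩
    · rw [N_pair ns s t]
      intro he
      apply hne
      have h1 := ((List.cons.injEq _ _ _ _).mp he).1
      have h2 := ((List.cons.injEq _ _ _ _).mp ((List.cons.injEq _ _ _ _).mp he).2).1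
      exact Prod.ext h1 h2
    · rw [hy, N_pair ns s t]; simp

theorem rstep_length {x y : List S} (h : RStep (rules ns.N) x y) : y.length = x.length := by
  obtain ⟨u, v, s, t, _, hx, hy⟩ := (rstep_iff_wstep ns x y).mp h
  rw [hx, hy]; simp

/-- The sharp bound on rewriting sequences. -/
theorem bound_thm (hl : LeftClass ns.N 3) (hr : RightClass ns.N 3) :
    ∀ (p ℓ : ℕ) (g : ℕ → List S), (g 0).length = p →
      (∀ k < ℓ, RStep (rules ns.N) (g k) (g (k + 1))) → ℓ ≤ p * (p - 1) / 2 := by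
  intro p ℓ g hp hsteps
  have N := nice_of_class33 ns hl hr
  have h2 : 2 * ℓ ≤ (g 0).length * ((g 0).length - 1) :=
    wchain_bound N g ℓ (fun m hm => (rstep_iff_wstep ns _ _).mp (hsteps m hm))
  rw [hp] at h2
  omega

theorem terminating_thm (hl : LeftClass ns.N 3) (hr : RightClass ns.N 3) :
    Terminating (rules ns.N) := by
  rintro ⟨g, hg⟩
  set p := (g 0).length
  have := bound_thm ns hl hr p (p * (p - 1) / 2 + 1) g rfl (fun k _ => hg k)
  omega

theorem N_invariant {x y : List S} (h : RStep (rules ns.N) x y) : ns.N y = ns.N x := by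
  obtain ⟨u, v, w, w', ⟨s, t, hw, hw', hne⟩, hx, hy⟩ := h
  rw [hx, hy, hw, hw']
  exact ns.mid u v [s, t]

theorem N_invariant_rtg {x y : List S} (h : Relation.ReflTransGen (RStep (rules ns.N)) x y) :
    ns.N y = ns.N x := by
  induction h with
  | refl => rfl
  | tail _ hstep ih => rw [N_invariant ns hstep, ih]

theorem applyAt_step (i : ℕ) (w : List S) :
    applyAt (nbar ns.N) i w = w ∨ RStep (rules ns.N) w (applyAt (nbar ns.N) i w) := by
  induction i using Nat.strong_induction_on generalizing w with
  | _ i ih =>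
  match i, w with
  | 0, w => exact Or.inl rfl
  | 1, [] => exact Or.inl rfl
  | 1, [a] => exact Or.inl rfl
  | 1, a :: b :: l =>
    by_cases h : nbar ns.N a b = (a, b)
    · left
      show (nbar ns.N a b).1 :: (nbar ns.N a b).2 :: l = a :: b :: l
      rw [h]
    · right
      refine ⟨[], l, [a, b], [(nbar ns.N a b).1, (nbar ns.N a b).2],
        ⟨a, b, rfl, (N_pair ns a b).symm ▸ rfl, ?_⟩, by simp, by simp; rfl⟩
      intro he
      apply h
      have h1 := ((List.cons.injEq _ _ _ _).mp he).1
      have h2 := (((List.cons.injEq _ _ _ _).mp ((List.cons.injEq _ _ _ _).mp he).2)).1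
      exact Prod.ext h1 h2
  | (n + 2), [] => exact Or.inl rfl
  | (n + 2), a :: l =>
    have := ih (n + 1) (by omega) (w := l)
    rcases this with heq | hstep
    · left
      show a :: applyAt (nbar ns.N) (n + 1) l = a :: l
      rw [heq]
    · right
      obtain ⟨u, v, w0, w0', hrule, hx, hy⟩ := hstep
      exact ⟨a :: u, v, w0, w0', hrule, by simp [hx], by
        show a :: applyAt (nbar ns.N) (n + 1) l = (a :: u) ++ w0' ++ v
        simp [hy]⟩

theorem rtg_applySeq (us : List ℕ) : ∀ (w : List S),
    Relation.ReflTransGen (RStep (rules ns.N)) w (applySeq (nbar ns.N) us w) := by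
  induction us with
  | nil => intro w; exact Relation.ReflTransGen.refl
  | cons i us ih =>
    intro w
    have h1 : Relation.ReflTransGen (RStep (rules ns.N)) w (applyAt (nbar ns.N) i w) := by
      rcases applyAt_step ns i w with heq | hstep
      · rw [heq]
      · exact Relation.ReflTransGen.single hstep
    exact h1.trans (ih (applyAt (nbar ns.N) i w))

theorem rtg_to_normal (hg : NbarGenerated ns.N) (w : List S) :
    Relation.ReflTransGen (RStep (rules ns.N)) w (ns.N w) := by
  obtain ⟨us, hus⟩ := hg w
  rw [hus]
  exact rtg_applySeq ns us w

theorem confluent_thm (hg : NbarGenerated ns.N) : Confluent (rules ns.N) := by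
  intro w w₁ w₂ h1 h2
  refine ⟨ns.N w, ?_, ?_⟩
  · have := rtg_to_normal ns hg w₁
    rwa [N_invariant_rtg ns h1] at this
  · have := rtg_to_normal ns hg w₂
    rwa [N_invariant_rtg ns h2] at this

end QNBridge


namespace QNBridge
open QN QNCore

variable {S : Type*} (ns : Normalisation S) (e : S)

theorem pie_append (u v : List S) : pie e (u ++ v) = pie e u ++ pie e v :=
  List.filterMap_append

theorem pie_cons_e (l : List S) : pie e (e :: l) = pie e l := by
  unfold pie
  rw [List.filterMap_cons]
  simp

theorem pie_cons_ne {s : S} (h : s ≠ e) (l : List S) :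
    pie e (s :: l) = ⟨s, h⟩ :: pie e l := by
  unfold pie
  rw [List.filterMap_cons, dif_neg h]

@[simp] theorem pie_nil : pie e ([] : List S) = [] := rfl

theorem pie_map_val (w : List {s : S // s ≠ e}) : pie e (w.map Subtype.val) = w := by
  induction w with
  | nil => rfl
  | cons a w ih =>
    rw [List.map_cons, pie_cons_ne e a.2, ih]

theorem pie_replicate (k : ℕ) : pie e (List.replicate k e) = [] := by
  induction k with
  | zero => rfl
  | succ k ih => rw [List.replicate_succ, pie_cons_e, ih]

theorem N_nil : ns.N [] = [] := by
  have := ns.length_eq []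
  exact List.length_eq_zero_iff.mp this

theorem N_rep (he : Neutral ns.N e) (k : ℕ) (w : List S) :
    ns.N (w ++ List.replicate k e) = ns.N w ++ List.replicate k e := by
  induction k with
  | zero => simp
  | succ k ih =>
    rw [List.replicate_succ' , ← List.append_assoc, (he _).1, ih, List.append_assoc]

theorem N_extract (he : Neutral ns.N e) :
    ∀ m : List S, ∃ k, ns.N m = ns.N ((pie e m).map Subtype.val) ++ List.replicate k e := by
  intro m
  induction m with
  | nil => exact ⟨0, by simp⟩
  | cons a m ih =>
    obtain ⟨k, ih⟩ := ih
    by_cases ha : a = e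
    · subst ha
      refine ⟨k + 1, ?_⟩
      rw [pie_cons_e, (he m).2, ih, List.replicate_succ', List.append_assoc]
    · refine ⟨k, ?_⟩
      rw [pie_cons_ne e ha, List.map_cons]
      have mid1 : ns.N (a :: ns.N m) = ns.N (a :: m) := by
        have := ns.mid [a] [] m
        simpa using this
      have mid2 : ns.N (a :: ns.N ((pie e m).map Subtype.val))
          = ns.N (a :: (pie e m).map Subtype.val) := by
        have := ns.mid [a] [] ((pie e m).map Subtype.val)
        simpa using this
      rw [← mid1, ih, show a :: (ns.N ((pie e m).map Subtype.val) ++ List.replicate k e)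
          = (a :: ns.N ((pie e m).map Subtype.val)) ++ List.replicate k e from rfl,
        N_rep ns e he, mid2]

theorem pie_N_of_pie_eq (he : Neutral ns.N e) {m m' : List S} (h : pie e m = pie e m') :
    pie e (ns.N m) = pie e (ns.N m') := by
  obtain ⟨k, hk⟩ := N_extract ns e he m
  obtain ⟨k', hk'⟩ := N_extract ns e he m'
  rw [hk, hk', pie_append, pie_append, pie_replicate, pie_replicate, h]

theorem pie_len_le (l : List S) : (pie e l).length ≤ l.length :=
  List.length_filterMap_le _ _

theorem pie_eq_of_len : ∀ l : List S, (pie e l).length = l.length →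
    (pie e l).map Subtype.val = l := by
  intro l
  induction l with
  | nil => intro _; rfl
  | cons a l ih =>
    intro h
    by_cases ha : a = e
    · exfalso
      rw [ha, pie_cons_e] at h
      have := pie_len_le e l
      simp at h
      omega
    · rw [pie_cons_ne e ha] at h ⊢
      simp only [List.length_cons, Nat.add_right_cancel_iff] at h
      rw [List.map_cons, ih h]

theorem rulesE_length {x y : List {s : S // s ≠ e}} (h : RStep (rulesE ns.N e) x y) :
    y.length ≤ x.length := by
  obtain ⟨u, v, w, w', ⟨s, t, hw, hne, hw'⟩, hx, hy⟩ := h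
  rw [hx, hy, hw, hw']
  have h1 : (pie e (ns.N [s.1, t.1])).length ≤ 2 := by
    have := pie_len_le e (ns.N [s.1, t.1])
    have h2 : (ns.N [s.1, t.1]).length = 2 := ns.length_eq _
    omega
  simp only [List.length_append, List.length_cons, List.length_nil]
  omega

theorem rulesE_to_rules {x y : List {s : S // s ≠ e}} (h : RStep (rulesE ns.N e) x y)
    (hlen : y.length = x.length) :
    RStep (rules ns.N) (x.map Subtype.val) (y.map Subtype.val) := by
  obtain ⟨u, v, w, w', ⟨s, t, hw, hne, hw'⟩, hx, hy⟩ := h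
  have hplen : (pie e (ns.N [s.1, t.1])).length = 2 := by
    rw [hx, hy, hw, hw'] at hlen
    simp only [List.length_append, List.length_cons, List.length_nil] at hlen
    omega
  have hfull : (pie e (ns.N [s.1, t.1])).map Subtype.val = ns.N [s.1, t.1] := by
    apply pie_eq_of_len
    rw [hplen, ns.length_eq]
    rfl
  refine ⟨u.map Subtype.val, v.map Subtype.val, [s.1, t.1], ns.N [s.1, t.1],
    ⟨s.1, t.1, rfl, rfl, hne⟩, ?_, ?_⟩
  · rw [hx, hw]; simp
  · rw [hy, hw']
    simp only [List.map_append]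
    rw [hfull]

theorem length_antitone (g : ℕ → List {s : S // s ≠ e})
    (hg : ∀ n, RStep (rulesE ns.N e) (g n) (g (n + 1))) :
    ∀ n m, n ≤ m → (g m).length ≤ (g n).length := by
  intro n m hnm
  induction m with
  | zero =>
    have : n = 0 := Nat.le_zero.mp hnm
    subst this; exact le_refl _
  | succ m ih =>
    rcases Nat.lt_or_ge n (m + 1) with h | h
    · exact le_trans (rulesE_length ns e (hg m)) (ih (Nat.lt_succ_iff.mp h))
    · have : n = m + 1 := Nat.le_antisymm hnm h
      subst this; exact le_refl _

theorem terminatingE_thm (hl : LeftClass ns.N 3) (hr : RightClass ns.N 3)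
    (he : Neutral ns.N e) : Terminating (rulesE ns.N e) := by
  rintro ⟨g, hg⟩
  -- lengths are non-increasing, hence eventually constant
  have hmono := length_antitone ns e g hg
  have hne : (Set.range fun n => (g n).length).Nonempty := ⟨(g 0).length, 0, rfl⟩
  obtain ⟨n₀, hn₀⟩ : ∃ n₀, (g n₀).length = sInf (Set.range fun n => (g n).length) := by
    have := Nat.sInf_mem hne
    obtain ⟨n₀, h⟩ := this
    exact ⟨n₀, h⟩
  have hconst : ∀ n, n₀ ≤ n → (g n).length = (g n₀).length := by
    intro n hn
    have h1 : (g n).length ≤ (g n₀).length := hmono n₀ n hn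
    have h2 : sInf (Set.range fun n => (g n).length) ≤ (g n).length :=
      Nat.sInf_le ⟨n, rfl⟩
    omega
  -- beyond n₀ every step is length-preserving, giving an infinite R-sequence
  apply terminating_thm ns hl hr
  refine ⟨fun n => (g (n₀ + n)).map Subtype.val, fun n => ?_⟩
  have hlen : (g (n₀ + n + 1)).length = (g (n₀ + n)).length := by
    have h1 := hconst (n₀ + n) (by omega)
    have h2 := hconst (n₀ + n + 1) (by omega)
    omega
  exact rulesE_to_rules ns e (hg (n₀ + n)) hlen


theorem rstep_cons {A : Type*} {R : List A → List A → Prop} {x y : List A} (a : A)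
    (h : RStep R x y) : RStep R (a :: x) (a :: y) := by
  obtain ⟨u, v, w, w', hr, hx, hy⟩ := h
  exact ⟨a :: u, v, w, w', hr, by simp [hx], by simp [hy]⟩

theorem rulesE_invariant (he : Neutral ns.N e) {x y : List {s : S // s ≠ e}}
    (h : RStep (rulesE ns.N e) x y) :
    pie e (ns.N (y.map Subtype.val)) = pie e (ns.N (x.map Subtype.val)) := by
  obtain ⟨u, v, w, w', ⟨s, t, hw, hne, hw'⟩, hx, hy⟩ := h
  subst hx hy hw hw'
  have h1 : pie e ((u ++ pie e (ns.N [s.1, t.1]) ++ v).map Subtype.val)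
      = pie e (u.map Subtype.val ++ ns.N [s.1, t.1] ++ v.map Subtype.val) := by
    simp only [List.map_append, pie_append]
    rw [pie_map_val e (pie e (ns.N [s.1, t.1])), pie_map_val, pie_map_val]
  have h2 := pie_N_of_pie_eq ns e he h1
  rw [h2, ns.mid (u.map Subtype.val) (v.map Subtype.val) [s.1, t.1]]
  simp

theorem rulesE_invariant_rtg (he : Neutral ns.N e) {x y : List {s : S // s ≠ e}}
    (h : Relation.ReflTransGen (RStep (rulesE ns.N e)) x y) :
    pie e (ns.N (y.map Subtype.val)) = pie e (ns.N (x.map Subtype.val)) := by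
  induction h with
  | refl => rfl
  | tail _ hstep ih => rw [rulesE_invariant ns e he hstep, ih]

theorem f_e_left (he : Neutral ns.N e) (b : S) : nbar ns.N e b = (b, e) := by
  have h1 : ns.N [e, b] = [b, e] := by
    have := (he [b]).2
    rw [ns.single b] at this
    exact this
  rw [nbar, h1, pairOf]

theorem f_e_right (he : Neutral ns.N e) (a : S) : nbar ns.N a e = (a, e) := by
  have h1 : ns.N [a, e] = [a, e] := by
    have := (he [a]).1
    rw [ns.single a] at this
    exact this
  rw [nbar, h1, pairOf]

theorem applyAt_pie_step (he : Neutral ns.N e) (i : ℕ) (w : List S) :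
    pie e (applyAt (nbar ns.N) i w) = pie e w ∨
      RStep (rulesE ns.N e) (pie e w) (pie e (applyAt (nbar ns.N) i w)) := by
  induction i using Nat.strong_induction_on generalizing w with
  | _ i ih =>
  match i, w with
  | 0, w => exact Or.inl rfl
  | 1, [] => exact Or.inl rfl
  | 1, [a] => exact Or.inl rfl
  | 1, a :: b :: l =>
    by_cases h : nbar ns.N a b = (a, b)
    · left
      show pie e ((nbar ns.N a b).1 :: (nbar ns.N a b).2 :: l) = _
      rw [h]
    · by_cases ha : a = e
      · left
        have hb : b ≠ e := by
          intro hbe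
          exact h (by rw [ha, hbe]; exact f_e_left ns e he e)
        have hf : nbar ns.N a b = (b, e) := by rw [ha]; exact f_e_left ns e he b
        show pie e ((nbar ns.N a b).1 :: (nbar ns.N a b).2 :: l) = _
        rw [hf, ha]
        show pie e (b :: e :: l) = pie e (e :: b :: l)
        rw [pie_cons_ne e hb, pie_cons_e, pie_cons_e, pie_cons_ne e hb]
      · by_cases hb : b = e
        · exfalso
          exact h (by rw [hb]; exact f_e_right ns e he a)
        · right
          show RStep (rulesE ns.N e) (pie e (a :: b :: l))
            (pie e ((nbar ns.N a b).1 :: (nbar ns.N a b).2 :: l))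
          have hxl : pie e (a :: b :: l) = [] ++ [⟨a, ha⟩, ⟨b, hb⟩] ++ pie e l := by
            rw [pie_cons_ne e ha, pie_cons_ne e hb]
            simp
          have hyl : pie e ((nbar ns.N a b).1 :: (nbar ns.N a b).2 :: l)
              = [] ++ pie e (ns.N [a, b]) ++ pie e l := by
            rw [N_pair ns a b]
            show pie e ([(nbar ns.N a b).1, (nbar ns.N a b).2] ++ l) = _
            rw [pie_append]
            simp [N_pair ns a b]
          refine ⟨[], pie e l, [⟨a, ha⟩, ⟨b, hb⟩], pie e (ns.N [a, b]),
            ⟨⟨a, ha⟩, ⟨b, hb⟩, rfl, ?_, rfl⟩, hxl, hyl⟩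
          exact (nbar_ne_iff ns a b).mp h
  | (n + 2), [] => exact Or.inl rfl
  | (n + 2), a :: l =>
    have hrec := ih (n + 1) (by omega) (w := l)
    by_cases ha : a = e
    · show pie e (a :: applyAt (nbar ns.N) (n + 1) l) = pie e (a :: l) ∨
        RStep (rulesE ns.N e) (pie e (a :: l)) (pie e (a :: applyAt (nbar ns.N) (n + 1) l))
      rw [ha, pie_cons_e, pie_cons_e]
      exact hrec
    · show pie e (a :: applyAt (nbar ns.N) (n + 1) l) = pie e (a :: l) ∨
        RStep (rulesE ns.N e) (pie e (a :: l)) (pie e (a :: applyAt (nbar ns.N) (n + 1) l))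
      rw [pie_cons_ne e ha, pie_cons_ne e ha]
      rcases hrec with heq | hstep
      · left; rw [heq]
      · right; exact rstep_cons _ hstep

theorem rtg_applySeq_pie (he : Neutral ns.N e) (us : List ℕ) : ∀ (m : List S),
    Relation.ReflTransGen (RStep (rulesE ns.N e)) (pie e m)
      (pie e (applySeq (nbar ns.N) us m)) := by
  induction us with
  | nil => intro m; exact Relation.ReflTransGen.refl
  | cons i us ih =>
    intro m
    have h1 : Relation.ReflTransGen (RStep (rulesE ns.N e)) (pie e m)
        (pie e (applyAt (nbar ns.N) i m)) := by
      rcases applyAt_pie_step ns e he i m with heq | hstep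
      · rw [heq]
      · exact Relation.ReflTransGen.single hstep
    exact h1.trans (ih (applyAt (nbar ns.N) i m))

theorem rulesE_to_normal (hg : NbarGenerated ns.N) (he : Neutral ns.N e)
    (w : List {s : S // s ≠ e}) :
    Relation.ReflTransGen (RStep (rulesE ns.N e)) w (pie e (ns.N (w.map Subtype.val))) := by
  obtain ⟨us, hus⟩ := hg (w.map Subtype.val)
  rw [hus]
  have := rtg_applySeq_pie ns e he us (w.map Subtype.val)
  rwa [pie_map_val] at this

theorem confluentE_thm (hg : NbarGenerated ns.N) (he : Neutral ns.N e) :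
    Confluent (rulesE ns.N e) := by
  intro w w₁ w₂ h1 h2
  refine ⟨pie e (ns.N (w.map Subtype.val)), ?_, ?_⟩
  · have := rulesE_to_normal ns e hg he w₁
    rwa [rulesE_invariant_rtg ns e he h1] at this
  · have := rulesE_to_normal ns e hg he w₂
    rwa [rulesE_invariant_rtg ns e he h2] at this

end QNBridge

open QN
/-- If `(S, N)` is a quadratic normalisation of class `(3, 3)`, then the
associated rewriting system is convergent, with every rewriting sequence from a length-`p`
word of length at most `p(p−1)/2`; moreover for an `N`-neutral `e`, the induced system over
`S∖{e}` is also convergent. -/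
theorem statement15 {S : Type*} (ns : Normalisation S) (hq : Quadratic ns.N)
    (hl : LeftClass ns.N 3) (hr : RightClass ns.N 3) :
    (Terminating (rules ns.N) ∧ Confluent (rules ns.N) ∧
      ∀ (p ℓ : ℕ) (f : ℕ → List S), (f 0).length = p →
        (∀ k < ℓ, RStep (rules ns.N) (f k) (f (k + 1))) → ℓ ≤ p * (p - 1) / 2) ∧
    (∀ e : S, Neutral ns.N e →
      Terminating (rulesE ns.N e) ∧ Confluent (rulesE ns.N e)) := by
  exact ⟨⟨QNBridge.terminating_thm ns hl hr, QNBridge.confluent_thm ns hq.2,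
    QNBridge.bound_thm ns hl hr⟩, fun e he =>
    ⟨QNBridge.terminatingE_thm ns e hl hr he, QNBridge.confluentE_thm ns e hq.2 he⟩⟩
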